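/- Let A ∈ ℝ^{d×d} be positive semidefinite. Then for every natural number k and every vector w ∈ ℝ^d, Σ_{i,j=1}^{d} w_i w_j · (A_{ij})^{2k+1} ≥ 0. -/

import Mathlib

lemma aux_entrywise_power (d : ℕ) (A : Matrix (Fin d) (Fin d) ℝ) (hA : A.PosSemidef)
    (n : ℕ) : ∀ w : Fin d → ℝ, 0 ≤ ∑ i, ∑ j, w i * w j * (A i j) ^ (n + 1) := by
  obtain ⟨r, v, hv⟩ := Matrix.posSemidef_iff_eq_sum_vecMulVec.mp hA
  obtain ⟨B, hB⟩ : ∃ B : Matrix (Fin r) (Fin d) ℝ, A = B.conjTranspose * B :=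
    ⟨Matrix.of v, by ext i j; simp [hv, Matrix.mul_apply, Matrix.vecMulVec_apply, Matrix.sum_apply]⟩
  have hAij : ∀ i j, A i j = ∑ m, B m i * B m j := by
    intro i j
    simp [hB, Matrix.mul_apply, Matrix.conjTranspose_apply, mul_comm]
  induction n with
  | zero =>
    intro w
    simp only [zero_add, pow_one]
    have := hA.dotProduct_mulVec_nonneg w
    simpa [dotProduct, Matrix.mulVec, Finset.mul_sum, mul_comm, mul_left_comm,
      mul_assoc] using this
  | succ n ih =>
    intro w
    have key : ∑ i, ∑ j, w i * w j * (A i j) ^ (n + 1 + 1)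
        = ∑ m, ∑ i, ∑ j, (w i * B m i) * (w j * B m j) * (A i j) ^ (n + 1) := by
      have step : ∀ i j : Fin d, w i * w j * (A i j) ^ (n + 1 + 1)
          = ∑ m, (w i * B m i) * (w j * B m j) * (A i j) ^ (n + 1) := by
        intro i j
        rw [pow_succ (A i j) (n + 1)]
        nth_rewrite 2 [hAij i j]
        rw [Finset.mul_sum, Finset.mul_sum]
        exact Finset.sum_congr rfl fun m _ => by ring
      calc ∑ i, ∑ j, w i * w j * (A i j) ^ (n + 1 + 1)
          = ∑ i, ∑ j, ∑ m, (w i * B m i) * (w j * B m j) * (A i j) ^ (n + 1) := by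
            exact Finset.sum_congr rfl fun i _ => Finset.sum_congr rfl fun j _ => step i j
        _ = ∑ i, ∑ m, ∑ j, (w i * B m i) * (w j * B m j) * (A i j) ^ (n + 1) := by
            refine Finset.sum_congr rfl fun i _ => ?_
            exact Finset.sum_comm
        _ = ∑ m, ∑ i, ∑ j, (w i * B m i) * (w j * B m j) * (A i j) ^ (n + 1) :=
            Finset.sum_comm
    rw [key]
    exact Finset.sum_nonneg fun m _ => ih (fun i => w i * B m i)

/-- If `A ∈ ℝ^{d×d}` is positive semidefinite, then for every natural number `k` and
every `w ∈ ℝ^d`, `Σ_{i,j} w_i w_j (A_{ij})^(2k+1) ≥ 0`. -/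
theorem odd_entrywise_power_psd_quadratic_form_nonneg (d : ℕ)
    (A : Matrix (Fin d) (Fin d) ℝ) (hA : A.PosSemidef) (k : ℕ) (w : Fin d → ℝ) :
    0 ≤ ∑ i, ∑ j, w i * w j * (A i j) ^ (2 * k + 1) := by
  exact aux_entrywise_power d A hA (2 * k) w
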